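/- Suppose that (i) the map α: C → Hom(A/C, N), c ↦ ([a] ↦ (a,c)), is a group isomorphism, and (ii) the subgroup A' ⊆ A has a complement, i.e., there is a subgroup D ⊆ A with A' ∩ D = 0 and A' + D = A. Then for any a ∈ A', the class [a] ∈ A'/(B+C) lies in the image of the natural map B^⊥ → A'/(B+C) if and only if the homomorphism λ_a: B/(B∩C) → N, [b] ↦ (a,b), extends to a group homomorphism A'/C → N, i.e., there exists a homomorphism h: A'/C → N with h([b]) = (a,b) for all b ∈ B. -/

import Mathlib

namespace OrthPairing

variable {A N : Type*} [AddCommGroup A] [AddCommGroup N]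

/-- The orthogonal `E^⊥ = {a ∈ A | (a, e) = 0 for all e ∈ E}` of a subgroup `E` of `A`
with respect to a bilinear pairing `b : A × A → N`. -/
def orth (b : A →+ A →+ N) (E : AddSubgroup A) : AddSubgroup A where
  carrier := {a : A | ∀ e ∈ E, b a e = 0}
  zero_mem' := by intro e he; simp
  add_mem' := by
    intro x y hx hy e he
    simp [hx e he, hy e he]
  neg_mem' := by
    intro x hx e he
    simp [hx e he]

/-- The map `C → Hom(A/D, N)`, `c ↦ ([a] ↦ (a, c))`, defined whenever `(x, c) = 0`
for all `x ∈ D` and `c ∈ C`. -/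
def mapToHom (b : A →+ A →+ N) (C D : AddSubgroup A)
    (h : ∀ c ∈ C, ∀ x ∈ D, b x c = 0) : ↥C →+ (A ⧸ D) →+ N where
  toFun c := QuotientAddGroup.lift D (b.flip (c : A)) (fun x hx => h c c.2 x hx)
  map_zero' := AddMonoidHom.ext fun q =>
    QuotientAddGroup.induction_on q (fun a => by simp)
  map_add' x y := AddMonoidHom.ext fun q =>
    QuotientAddGroup.induction_on q (fun a => by simp; rfl)

/-- The natural map `B^⊥ → A'/(B+C)` (recall `B^⊥ ⊆ A' = (B ∩ C)^⊥`). -/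
def natMap (b : A →+ A →+ N) (B C : AddSubgroup A) :
    ↥(orth b B) →+ ↥(orth b (B ⊓ C)) ⧸ (B ⊔ C).addSubgroupOf (orth b (B ⊓ C)) :=
  (QuotientAddGroup.mk' ((B ⊔ C).addSubgroupOf (orth b (B ⊓ C)))).comp
    (AddSubgroup.inclusion (fun x hx e he => hx e he.1))

/-- Suppose (i) the map `α : C → Hom(A/C, N)`, `c ↦ ([a] ↦ (a,c))`, is an isomorphism, and
(ii) the subgroup `A' = (B ∩ C)^⊥` of `A` has a complement.  Then for any `a ∈ A'`, the class
`[a] ∈ A'/(B+C)` lies in the image of the natural map `B^⊥ → A'/(B+C)` if and only if the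
homomorphism `λ_a : B/(B∩C) → N`, `[b] ↦ (a,b)`, extends to a homomorphism `A'/C → N`, i.e.
there is a homomorphism `h : A'/C → N` with `h([b]) = (a,b)` for all `b ∈ B`. -/
theorem mem_image_iff_lambda_extends (b : A →+ A →+ N) (B C : AddSubgroup A)
    (hsym : (∀ x y : A, b x y = b y x) ∨ (∀ x y : A, b x y = - b y x))
    (hB : B ≤ orth b B) (hC : C ≤ orth b C)
    (hα : Function.Bijective ⇑(mapToHom b C C (fun c hc x hx => hC hx c hc)))
    (hcompl : ∃ D : AddSubgroup A,
      orth b (B ⊓ C) ⊓ D = ⊥ ∧ orth b (B ⊓ C) ⊔ D = ⊤) :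
    ∀ a : ↥(orth b (B ⊓ C)),
      (QuotientAddGroup.mk' ((B ⊔ C).addSubgroupOf (orth b (B ⊓ C))) a ∈
          (natMap b B C).range ↔
        ∃ h : (↥(orth b (B ⊓ C)) ⧸ C.addSubgroupOf (orth b (B ⊓ C))) →+ N,
          ∀ x : ↥(orth b (B ⊓ C)), (x : A) ∈ B →
            h (QuotientAddGroup.mk x) = b (a : A) (x : A)) := by
  obtain ⟨D, hD1, hD2⟩ := hcompl
  set A' : AddSubgroup A := orth b (B ⊓ C) with hA'def
  have hBA' : B ≤ A' := fun x hx e he => hB hx e he.1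
  have hCA' : C ≤ A' := fun x hx e he => hC hx e he.2
  intro a
  constructor
  · -- forward direction
    rintro ⟨⟨y, hy⟩, heq⟩
    have hyA' : y ∈ A' := fun e he => hy e he.1
    have hsub : ((a : ↥A') - ⟨y, hyA'⟩ : ↥A') ∈ (B ⊔ C).addSubgroupOf A' := by
      have : (QuotientAddGroup.mk' ((B ⊔ C).addSubgroupOf A'))
          (⟨y, hyA'⟩ : ↥A') = QuotientAddGroup.mk' _ a := heq
      simpa using (QuotientAddGroup.eq_iff_sub_mem.mp this.symm)
    rw [AddSubgroup.mem_addSubgroupOf] at hsub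
    have hsub' : ((a : A) - y) ∈ B ⊔ C := hsub
    obtain ⟨u, hu, v, hv, huv⟩ := AddSubgroup.mem_sup.mp hsub'
    refine ⟨QuotientAddGroup.lift (C.addSubgroupOf A') ((b v).comp A'.subtype)
      (fun z hz => hC hv z.1 (AddSubgroup.mem_addSubgroupOf.mp hz)), ?_⟩
    intro x hxB
    have h1 : (QuotientAddGroup.lift (C.addSubgroupOf A') ((b v).comp A'.subtype)
        (fun z hz => hC hv z.1 (AddSubgroup.mem_addSubgroupOf.mp hz)))
        (QuotientAddGroup.mk x) = b v (x : A) := rfl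
    rw [h1]
    have ha : (a : A) = y + (u + v) := by
      rw [huv]; abel
    have hyx : b y (x : A) = 0 := hy (x : A) hxB
    have hux : b u (x : A) = 0 := hB hu (x : A) hxB
    rw [ha]
    simp [map_add, hyx, hux]
  · -- reverse direction
    rintro ⟨h, hh⟩
    have hIsA : IsCompl A' D := ⟨disjoint_iff.mpr hD1, codisjoint_iff.mpr hD2⟩
    have hIs : IsCompl (AddSubgroup.toIntSubmodule A') (AddSubgroup.toIntSubmodule D) :=
      AddSubgroup.toIntSubmodule.isCompl hIsA
    set proj := (AddSubgroup.toIntSubmodule A').linearProjOfIsCompl _ hIs with hproj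
    set e : ↥(AddSubgroup.toIntSubmodule A') →+ ↥A' :=
      { toFun := fun z => ⟨z.1, z.2⟩, map_zero' := rfl, map_add' := fun _ _ => rfl } with he
    set H : A →+ N := h.comp ((QuotientAddGroup.mk' (C.addSubgroupOf A')).comp
      (e.comp proj.toAddMonoidHom)) with hH
    have hHA' : ∀ x : ↥A', H (x : A) = h (QuotientAddGroup.mk x) := by
      intro x
      have hpx : proj (x : A) = ⟨(x : A), x.2⟩ :=
        Submodule.linearProjOfIsCompl_apply_left hIs ⟨(x : A), x.2⟩
      simp only [hH, AddMonoidHom.comp_apply, LinearMap.toAddMonoidHom_coe, hpx]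
      rfl
    have hvan : ∀ c ∈ C, H c = 0 := by
      intro c hc
      have : H c = h (QuotientAddGroup.mk (⟨c, hCA' hc⟩ : ↥A')) := hHA' ⟨c, hCA' hc⟩
      rw [this, (QuotientAddGroup.eq_zero_iff _).mpr
        (AddSubgroup.mem_addSubgroupOf.mpr hc), map_zero]
    obtain ⟨c₀, hc₀⟩ := hα.2 (QuotientAddGroup.lift C H hvan)
    have key : ∀ z : A, b z (c₀ : A) = H z := by
      intro z
      have := congrArg (fun f : (A ⧸ C) →+ N => f (QuotientAddGroup.mk z)) hc₀
      exact this
    have hHB : ∀ x : A, x ∈ B → H x = b (a : A) x := by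
      intro x hx
      rw [hHA' ⟨x, hBA' hx⟩]
      exact hh ⟨x, hBA' hx⟩ hx
    obtain ⟨c, hcC, hbc⟩ : ∃ c ∈ C, ∀ x ∈ B, b c x = b (a : A) x := by
      rcases hsym with hs | hs
      · exact ⟨(c₀ : A), c₀.2, fun x hx => by rw [hs, key x, hHB x hx]⟩
      · refine ⟨-(c₀ : A), neg_mem c₀.2, fun x hx => ?_⟩
        have : b (c₀ : A) x = - b x (c₀ : A) := hs _ _
        rw [map_neg, AddMonoidHom.neg_apply, this, neg_neg, key x, hHB x hx]
    set y : A := (a : A) - c with hy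
    have hyA' : y ∈ A' := sub_mem a.2 (hCA' hcC)
    have hyB : y ∈ orth b B := by
      intro x hx
      simp [hy, map_sub, hbc x hx]
    refine ⟨⟨y, hyB⟩, ?_⟩
    rw [natMap, AddMonoidHom.comp_apply]
    apply QuotientAddGroup.eq_iff_sub_mem.mpr
    apply AddSubgroup.mem_addSubgroupOf.mpr
    show y - (a : A) ∈ B ⊔ C
    have hyc : y - (a : A) = -c := by rw [hy]; abel
    rw [hyc]
    exact neg_mem (AddSubgroup.mem_sup_right hcC)

end OrthPairing
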